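/- Let U ∈ F^{(m−a)×m} be a generator matrix of a code C_1 ⊆ F^m and V ∈ F^{(n−b)×n} a generator matrix of C_2 ⊆ F^n. An erasure pattern E ⊆ [m]×[n] is correctable by the tensor code C_1 ⊗ C_2 (i.e., the restriction map x ↦ x|_{\bar E} is injective on C_1 ⊗ C_2) if and only if the tensor products {U_i ⊗ V_j : (i,j) ∈ \bar E} span F^{m−a} ⊗ F^{n−b}, where U_i, V_j denote the i-th column of U and j-th column of V. -/

import Mathlib

open Matrix

/-- Membership in the tensor code `C₁ ⊗ C₂`: an `m × n` matrix whose columns lie in the row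
space of `U` (the code `C₁`) and whose rows lie in the row space of `V` (the code `C₂`). -/
def tensorMem {F : Type} [Field F] {m n ma nb : ℕ} (U : Matrix (Fin ma) (Fin m) F)
    (V : Matrix (Fin nb) (Fin n) F) (X : Matrix (Fin m) (Fin n) F) : Prop :=
  (∀ j, (fun i => X i j) ∈ Submodule.span F (Set.range U)) ∧
  (∀ i, (fun j => X i j) ∈ Submodule.span F (Set.range V))

section Aux

variable {F : Type} [Field F]

/-- Rows of a full-row-rank matrix are linearly independent. -/
lemma rowsLI {k m : ℕ} (U : Matrix (Fin k) (Fin m) F) (hU : U.rank = k) :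
    LinearIndependent F (fun i => U i) := by
  rw [linearIndependent_iff_card_eq_finrank_span, Fintype.card_fin, Set.finrank]
  erw [← Matrix.rank_eq_finrank_span_row, hU]

lemma mem_span_rows_iff {k m : ℕ} (U : Matrix (Fin k) (Fin m) F) (v : Fin m → F) :
    v ∈ Submodule.span F (Set.range U) ↔
      ∃ c : Fin k → F, v = fun i => ∑ r, c r * U r i := by
  erw [← range_vecMulLinear]
  constructor
  · rintro ⟨c, rfl⟩
    exact ⟨c, by ext i; simp [Matrix.vecMulLinear_apply, Matrix.vecMul, dotProduct]⟩
  · rintro ⟨c, rfl⟩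
    exact ⟨c, by ext i; simp [Matrix.vecMulLinear_apply, Matrix.vecMul, dotProduct]⟩

/-- Linear independence phrased with sums. -/
lemma li_sum {k m : ℕ} {U : Matrix (Fin k) (Fin m) F}
    (hU : LinearIndependent F (fun i => U i)) (c : Fin k → F)
    (h : ∀ i, ∑ r, c r * U r i = 0) : ∀ r, c r = 0 := by
  have := Fintype.linearIndependent_iff.mp hU c ?_
  · exact this
  · ext i
    simpa using h i

/-- Every tensor codeword has the form `∑ M r s • (Uᵣ ⊗ Vₛ)`. -/
lemma tensorMem_exists {k l m n : ℕ} (U : Matrix (Fin k) (Fin m) F)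
    (hU : LinearIndependent F (fun i => U i)) (V : Matrix (Fin l) (Fin n) F)
    {X : Matrix (Fin m) (Fin n) F} (hX : tensorMem U V X) :
    ∃ M : Matrix (Fin k) (Fin l) F, ∀ i j, X i j = ∑ r, ∑ s, M r s * U r i * V s j := by
  obtain ⟨hcol, hrow⟩ := hX
  -- choose coefficients for each column
  have hA : ∀ j, ∃ c : Fin k → F, (fun i => X i j) = U.vecMulLinear c := by
    intro j
    have := hcol j
    erw [← range_vecMulLinear] at this
    obtain ⟨c, hc⟩ := this
    exact ⟨c, hc.symm⟩
  choose A hAc using hA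
  -- a linear left inverse for vecMulLinear U
  have hker : LinearMap.ker U.vecMulLinear = ⊥ := by
    rw [LinearMap.ker_eq_bot, Matrix.coe_vecMulLinear]
    exact Matrix.vecMul_injective_iff.mpr hU
  obtain ⟨g, hg⟩ := U.vecMulLinear.exists_leftInverse_of_injective hker
  have hAg : ∀ j, A j = g (fun i => X i j) := by
    intro j
    rw [hAc j]
    exact (congrFun (congrArg DFunLike.coe hg) (A j)).symm
  -- each "row" of A lies in the row space of V
  have hrowA : ∀ r : Fin k, (fun j => A j r) ∈ Submodule.span F (Set.range V) := by
    intro r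
    have hgv : ∀ v : Fin m → F, g v r = ∑ i, v i * g (Pi.single i (1:F)) r := by
      intro v
      conv_lhs => rw [← Finset.univ_sum_single v]
      rw [map_sum]
      simp only [Finset.sum_apply]
      congr 1
      ext i
      have : (Pi.single i (v i) : Fin m → F) = v i • (Pi.single i 1 : Fin m → F) := by
        ext j'
        by_cases h : j' = i
        · subst h; simp
        · simp [Pi.single_eq_of_ne h]
      rw [this, _root_.map_smul]
      simp [smul_eq_mul]
    have : (fun j => A j r) = ∑ i, (g (Pi.single i (1:F)) r) • (fun j => X i j) := by
      ext j
      rw [hAg j, hgv]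
      simp only [Finset.sum_apply, Pi.smul_apply, smul_eq_mul]
      exact Finset.sum_congr rfl fun i _ => mul_comm _ _
    rw [this]
    exact Submodule.sum_mem _ fun i _ => Submodule.smul_mem _ _ (hrow i)
  -- choose coefficients for the rows of A
  have hM : ∀ r : Fin k, ∃ c : Fin l → F, (fun j => A j r) = fun j => ∑ s, c s * V s j :=
    fun r => (mem_span_rows_iff V _).mp (hrowA r)
  choose M hMc using hM
  refine ⟨fun r s => M r s, fun i j => ?_⟩
  have h1 : X i j = ∑ r, A j r * U r i := by
    have := congrFun (hAc j) i
    simpa [Matrix.vecMulLinear_apply, Matrix.vecMul, dotProduct] using this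
  rw [h1]
  refine Finset.sum_congr rfl fun r _ => ?_
  have h2 : A j r = ∑ s, M r s * V s j := congrFun (hMc r) j
  rw [h2, Finset.sum_mul]
  refine Finset.sum_congr rfl fun s _ => ?_
  ring

/-- Injectivity of `M ↦ ∑ M r s • (Uᵣ ⊗ Vₛ)`. -/
lemma tensor_inj {k l m n : ℕ} (U : Matrix (Fin k) (Fin m) F)
    (hU : LinearIndependent F (fun i => U i)) (V : Matrix (Fin l) (Fin n) F)
    (hV : LinearIndependent F (fun i => V i)) (M : Matrix (Fin k) (Fin l) F)
    (h : ∀ i j, ∑ r, ∑ s, M r s * U r i * V s j = 0) : M = 0 := by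
  have h1 : ∀ j r, ∑ s, M r s * V s j = 0 := by
    intro j
    refine li_sum hU (fun r => ∑ s, M r s * V s j) fun i => ?_
    rw [← h i j]
    refine Finset.sum_congr rfl fun r _ => ?_
    rw [Finset.sum_mul]
    refine Finset.sum_congr rfl fun s _ => ?_
    ring
  ext r s
  simpa using li_sum hV (fun s => M r s) (fun j => h1 j r) s

/-- Pointwise tensors are codewords. -/
lemma tensorMem_of_sum {k l m n : ℕ} (U : Matrix (Fin k) (Fin m) F)
    (V : Matrix (Fin l) (Fin n) F) (M : Matrix (Fin k) (Fin l) F) :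
    tensorMem U V (fun i j => ∑ r, ∑ s, M r s * U r i * V s j) := by
  constructor
  · intro j
    rw [mem_span_rows_iff]
    refine ⟨fun r => ∑ s, M r s * V s j, ?_⟩
    ext i
    refine Finset.sum_congr rfl fun r _ => ?_
    rw [Finset.sum_mul]
    exact Finset.sum_congr rfl fun s _ => by ring
  · intro i
    rw [mem_span_rows_iff]
    refine ⟨fun s => ∑ r, M r s * U r i, ?_⟩
    ext j
    show (∑ r, ∑ s, M r s * U r i * V s j) = ∑ s, (∑ r, M r s * U r i) * V s j
    rw [Finset.sum_comm]
    exact Finset.sum_congr rfl fun s _ => by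
      rw [Finset.sum_mul]

lemma tensorMem_zero {k l m n : ℕ} (U : Matrix (Fin k) (Fin m) F)
    (V : Matrix (Fin l) (Fin n) F) :
    tensorMem U V (0 : Matrix (Fin m) (Fin n) F) := by
  refine ⟨fun j => ?_, fun i => ?_⟩
  · have h0 : (fun i => (0 : Matrix (Fin m) (Fin n) F) i j) = 0 := by ext i; simp
    rw [h0]; exact Submodule.zero_mem _
  · have h0 : (fun j => (0 : Matrix (Fin m) (Fin n) F) i j) = 0 := by ext j; simp
    rw [h0]; exact Submodule.zero_mem _

lemma tensorMem_sub {k l m n : ℕ} {U : Matrix (Fin k) (Fin m) F}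
    {V : Matrix (Fin l) (Fin n) F} {X Y : Matrix (Fin m) (Fin n) F}
    (hX : tensorMem U V X) (hY : tensorMem U V Y) : tensorMem U V (X - Y) := by
  constructor
  · intro j
    have : (fun i => (X - Y) i j) = (fun i => X i j) - fun i => Y i j := by
      ext i; simp [Matrix.sub_apply]
    rw [this]
    exact Submodule.sub_mem _ (hX.1 j) (hY.1 j)
  · intro i
    have : (fun j => (X - Y) i j) = (fun j => X i j) - fun j => Y i j := by
      ext j; simp [Matrix.sub_apply]
    rw [this]
    exact Submodule.sub_mem _ (hX.2 i) (hY.2 i)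

/-- Span-is-top in terms of the trace pairing. -/
lemma span_eq_top_iff_pairing {k l : ℕ} (S : Set (Matrix (Fin k) (Fin l) F)) :
    Submodule.span F S = ⊤ ↔
      ∀ M : Matrix (Fin k) (Fin l) F,
        (∀ W ∈ S, ∑ r, ∑ s, M r s * W r s = 0) → M = 0 := by
  constructor
  · intro htop M hM
    have key : ∀ N : Matrix (Fin k) (Fin l) F, ∑ r, ∑ s, M r s * N r s = 0 := by
      intro N
      have hN : N ∈ Submodule.span F S := htop ▸ Submodule.mem_top
      induction hN using Submodule.span_induction with
      | mem W hW => exact hM W hW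
      | zero => simp
      | add X Y _ _ hX hY =>
        simp only [Matrix.add_apply, mul_add, Finset.sum_add_distrib, hX, hY, add_zero]
      | smul c X _ hX =>
        simp only [Matrix.smul_apply, smul_eq_mul]
        calc ∑ r, ∑ s, M r s * (c * X r s) = c * ∑ r, ∑ s, M r s * X r s := by
              rw [Finset.mul_sum]
              exact Finset.sum_congr rfl fun r _ => by
                rw [Finset.mul_sum]; exact Finset.sum_congr rfl fun s _ => by ring
          _ = 0 := by rw [hX, mul_zero]
    ext r s
    have := key (Matrix.single r s 1)
    simp only [Matrix.single, Matrix.of_apply, mul_ite, mul_one, mul_zero] at this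
    rw [Finset.sum_eq_single r (fun r' _ hr' => by
          rw [Finset.sum_eq_zero]; intro s' _; simp [hr'.symm]) (by simp)] at this
    rw [Finset.sum_eq_single s (fun s' _ hs' => by simp [hs'.symm]) (by simp)] at this
    simpa using this
  · intro h
    rw [← Subspace.dualAnnihilator_inj, Submodule.dualAnnihilator_top]
    rw [Submodule.eq_bot_iff]
    intro φ hφ
    rw [Submodule.mem_dualAnnihilator] at hφ
    set M : Matrix (Fin k) (Fin l) F :=
      Matrix.of fun r s => φ (Matrix.single r s 1) with hMdef
    have hφN : ∀ N : Matrix (Fin k) (Fin l) F, φ N = ∑ r, ∑ s, M r s * N r s := by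
      intro N
      conv_lhs => rw [Matrix.matrix_eq_sum_single N]
      rw [map_sum]
      refine Finset.sum_congr rfl fun r _ => ?_
      rw [map_sum]
      refine Finset.sum_congr rfl fun s _ => ?_
      have : Matrix.single r s (N r s) = N r s • Matrix.single r s 1 := by
        rw [Matrix.smul_single, smul_eq_mul, mul_one]
      rw [this, _root_.map_smul, smul_eq_mul, hMdef]
      simp [mul_comm]
    have hM0 : M = 0 := by
      refine h M fun W hW => ?_
      rw [← hφN W]
      exact hφ W (Submodule.subset_span hW)
    ext N
    rw [hφN N, hM0]
    simp

end Aux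

/-- An erasure pattern `E ⊆ [m]×[n]` is correctable by the tensor code `C₁ ⊗ C₂`
(restriction to `\bar E` is injective) iff the tensor products `{Uᵢ ⊗ Vⱼ : (i,j) ∉ E}`
of columns of the generator matrices span `F^{m−a} ⊗ F^{n−b}`. -/
theorem correctable_iff_tensor_span {F : Type} [Field F] {m n a b : ℕ}
    (ha : a ≤ m) (hb : b ≤ n)
    (U : Matrix (Fin (m - a)) (Fin m) F) (hU : U.rank = m - a)
    (V : Matrix (Fin (n - b)) (Fin n) F) (hV : V.rank = n - b)
    (E : Set (Fin m × Fin n)) :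
    (∀ X Y : Matrix (Fin m) (Fin n) F, tensorMem U V X → tensorMem U V Y →
        (∀ p : Fin m × Fin n, p ∉ E → X p.1 p.2 = Y p.1 p.2) → X = Y) ↔
      Submodule.span F {W : Matrix (Fin (m - a)) (Fin (n - b)) F |
          ∃ p : Fin m × Fin n, p ∉ E ∧ W = fun r s => U r p.1 * V s p.2} = ⊤ := by
  have hUli : LinearIndependent F (fun i => U i) := rowsLI U hU
  have hVli : LinearIndependent F (fun i => V i) := rowsLI V hV
  rw [span_eq_top_iff_pairing]
  constructor
  · intro hC M hM
    set X : Matrix (Fin m) (Fin n) F :=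
      fun i j => ∑ r, ∑ s, M r s * U r i * V s j with hXdef
    have hX0 : X = 0 := by
      refine hC X 0 (tensorMem_of_sum U V M) (tensorMem_zero U V) fun p hp => ?_
      have := hM (fun r s => U r p.1 * V s p.2) ⟨p, hp, rfl⟩
      simp only [Matrix.zero_apply, hXdef]
      rw [← this]
      exact Finset.sum_congr rfl fun r _ => Finset.sum_congr rfl fun s _ => by ring
    refine tensor_inj U hUli V hVli M fun i j => ?_
    have := congrFun (congrFun hX0 i) j
    simpa [hXdef] using this
  · intro h X Y hX hY hagree
    obtain ⟨M, hM⟩ := tensorMem_exists U hUli V (tensorMem_sub hX hY)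
    have hM0 : M = 0 := by
      refine h M ?_
      rintro W ⟨p, hp, rfl⟩
      have h1 : (X - Y) p.1 p.2 = 0 := by
        rw [Matrix.sub_apply, hagree p hp, sub_self]
      rw [hM p.1 p.2] at h1
      rw [← h1]
      exact Finset.sum_congr rfl fun r _ => Finset.sum_congr rfl fun s _ => by ring
    have : X - Y = 0 := by
      ext i j
      rw [hM i j, hM0]
      simp
    exact sub_eq_zero.mp this
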